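/- For two circles of equal radius r > 0 whose centers are at distance d with 0 ≤ d < 2r, setting θ = 2·arccos(d/(2r)), the area of their intersection equals r²(θ − sin θ). -/

import Mathlib

open MeasureTheory Real


private lemma key_integral (r a : ℝ) (ha : 0 ≤ a) (har : a < r) :
    ∫ u in a..r, Real.sqrt (r ^ 2 - u ^ 2) =
      (r ^ 2 * (π / 2) - a * Real.sqrt (r ^ 2 - a ^ 2) - r ^ 2 * arcsin (a / r)) / 2 := by
  have hr : 0 < r := ha.trans_lt har
  set F : ℝ → ℝ := fun x => (x * Real.sqrt (r ^ 2 - x ^ 2) + r ^ 2 * arcsin (x / r)) / 2 with hF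
  have hcont : ContinuousOn F (Set.Icc a r) := by
    apply Continuous.continuousOn
    exact ((continuous_id.mul ((continuous_const.sub (continuous_pow 2)).sqrt)).add
      (continuous_const.mul (Real.continuous_arcsin.comp (continuous_id.div_const r)))).div_const 2
  have hderiv : ∀ x ∈ Set.Ioo a r, HasDerivWithinAt F (Real.sqrt (r ^ 2 - x ^ 2)) (Set.Ioi x) x := by
    intro x hx
    have hx0 : 0 ≤ x := ha.trans hx.1.le
    have hxr : x < r := hx.2
    have hpos : 0 < r ^ 2 - x ^ 2 := by nlinarith
    have hs : 0 < Real.sqrt (r ^ 2 - x ^ 2) := Real.sqrt_pos.mpr hpos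
    have h1 : HasDerivAt (fun x : ℝ => Real.sqrt (r ^ 2 - x ^ 2))
        (1 / (2 * Real.sqrt (r ^ 2 - x ^ 2)) * (0 - 2 * x)) x := by
      have hinner : HasDerivAt (fun x : ℝ => r ^ 2 - x ^ 2) (0 - 2 * x) x := by
        have := ((hasDerivAt_pow 2 x)).const_sub (r ^ 2)
        simpa using this
      exact (Real.hasDerivAt_sqrt hpos.ne').comp x hinner
    have h2 : HasDerivAt (fun x : ℝ => arcsin (x / r)) ((1 / Real.sqrt (1 - (x / r) ^ 2)) * (1 / r)) x := by
      have hne1 : x / r ≠ -1 := by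
        have : 0 ≤ x / r := div_nonneg hx0 hr.le
        intro h; rw [h] at this; linarith
      have hne2 : x / r ≠ 1 := by
        have : x / r < 1 := (div_lt_one hr).mpr hxr
        exact this.ne
      have hd : HasDerivAt (fun x : ℝ => x / r) (1 / r) x := by
        simpa using (hasDerivAt_id x).div_const r
      exact (Real.hasDerivAt_arcsin hne1 hne2).comp x hd
    have h3 : HasDerivAt F ((((1 : ℝ) * Real.sqrt (r ^ 2 - x ^ 2) +
        x * (1 / (2 * Real.sqrt (r ^ 2 - x ^ 2)) * (0 - 2 * x))) +
        r ^ 2 * ((1 / Real.sqrt (1 - (x / r) ^ 2)) * (1 / r))) / 2) x := by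
      exact (((hasDerivAt_id x).mul h1).add (h2.const_mul (r ^ 2))).div_const 2
    have heq : (((1 : ℝ) * Real.sqrt (r ^ 2 - x ^ 2) +
        x * (1 / (2 * Real.sqrt (r ^ 2 - x ^ 2)) * (0 - 2 * x))) +
        r ^ 2 * ((1 / Real.sqrt (1 - (x / r) ^ 2)) * (1 / r))) / 2 = Real.sqrt (r ^ 2 - x ^ 2) := by
      have hsq : Real.sqrt (r ^ 2 - x ^ 2) ^ 2 = r ^ 2 - x ^ 2 := Real.sq_sqrt hpos.le
      have hrw : Real.sqrt (1 - (x / r) ^ 2) = Real.sqrt (r ^ 2 - x ^ 2) / r := by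
        have h9 : 1 - (x / r) ^ 2 = (r ^ 2 - x ^ 2) / r ^ 2 := by field_simp
        rw [h9, Real.sqrt_div hpos.le, Real.sqrt_sq hr.le]
      rw [hrw]
      field_simp
      linear_combination (-(2:ℝ)) * hsq
    rw [heq] at h3
    exact h3.hasDerivWithinAt
  have hint : IntervalIntegrable (fun u => Real.sqrt (r ^ 2 - u ^ 2)) volume a r := by
    apply Continuous.intervalIntegrable; fun_prop
  have := intervalIntegral.integral_eq_sub_of_hasDeriv_right_of_le har.le hcont hderiv hint
  rw [this, hF]
  have h1 : Real.sqrt (r ^ 2 - r ^ 2) = 0 := by simp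
  have h2 : arcsin (r / r) = π / 2 := by rw [div_self hr.ne']; exact Real.arcsin_one
  simp only [h1, h2]
  ring


lemma slice_volume (c : ℝ) : volume {y : ℝ | y ^ 2 ≤ c} = ENNReal.ofReal (2 * Real.sqrt c) := by
  rcases le_or_gt 0 c with hc | hc
  · have : {y : ℝ | y ^ 2 ≤ c} = Set.Icc (-Real.sqrt c) (Real.sqrt c) := by
      ext y
      simp only [Set.mem_setOf_eq, Set.mem_Icc, ← abs_le]
      constructor
      · intro h
        rw [← Real.sqrt_sq_eq_abs]
        exact Real.sqrt_le_sqrt h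
      · intro h
        have h2 := mul_self_le_mul_self (abs_nonneg y) h
        rw [abs_mul_abs_self, Real.mul_self_sqrt hc] at h2
        nlinarith
    rw [this, Real.volume_Icc]
    congr 1
    ring
  · have h1 : {y : ℝ | y ^ 2 ≤ c} = ∅ := by
      ext y; simp only [Set.mem_setOf_eq, Set.mem_empty_iff_false, iff_false]
      nlinarith [sq_nonneg y]
    rw [h1, Real.sqrt_eq_zero_of_nonpos hc.le]
    simp

lemma lens_area (r a : ℝ) (ha : 0 ≤ a) (har : a < r) :
    volume {p : ℝ × ℝ | (p.1 + a) ^ 2 + p.2 ^ 2 ≤ r ^ 2 ∧ (p.1 - a) ^ 2 + p.2 ^ 2 ≤ r ^ 2} =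
      ENNReal.ofReal (2 * r ^ 2 * arccos (a / r) - 2 * a * Real.sqrt (r ^ 2 - a ^ 2)) := by
  have hr : 0 < r := ha.trans_lt har
  set T : Set (ℝ × ℝ) :=
    {p : ℝ × ℝ | (p.1 + a) ^ 2 + p.2 ^ 2 ≤ r ^ 2 ∧ (p.1 - a) ^ 2 + p.2 ^ 2 ≤ r ^ 2} with hTdef
  have hT : MeasurableSet T := by
    have : T = {p : ℝ × ℝ | (p.1 + a) ^ 2 + p.2 ^ 2 ≤ r ^ 2} ∩
        {p : ℝ × ℝ | (p.1 - a) ^ 2 + p.2 ^ 2 ≤ r ^ 2} := rfl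
    rw [this]
    exact (measurableSet_le (by fun_prop) measurable_const).inter
      (measurableSet_le (by fun_prop) measurable_const)
  set f : ℝ → ℝ := fun x => 2 * Real.sqrt (r ^ 2 - (|x| + a) ^ 2) with hfdef
  have hcontf : Continuous f :=
    continuous_const.mul ((continuous_const.sub ((_root_.continuous_abs.add
      continuous_const).pow 2)).sqrt)
  have hvolT : volume T = ∫⁻ x : ℝ, ENNReal.ofReal (f x) := by
    rw [MeasureTheory.Measure.volume_eq_prod, MeasureTheory.Measure.prod_apply hT]
    congr 1
    ext x
    have hslice : (Prod.mk x ⁻¹' T) = {y : ℝ | y ^ 2 ≤ r ^ 2 - (|x| + a) ^ 2} := by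
      ext y
      simp only [Set.mem_preimage, Set.mem_setOf_eq, hTdef]
      rcases abs_cases x with ⟨h1, h2⟩ | ⟨h1, h2⟩ <;> rw [h1]
      · constructor
        · intro h; nlinarith [h.1]
        · intro h; constructor <;> nlinarith [mul_nonneg ha h2]
      · constructor
        · intro h; nlinarith [h.2]
        · intro h
          have hx0 : x ≤ 0 := by linarith
          constructor <;> nlinarith [mul_nonneg ha (neg_nonneg.mpr hx0)]
    rw [hslice, slice_volume]
  rw [hvolT]
  have hnn : ∀ x, 0 ≤ f x := fun x => by positivity
  have hsupp : ∀ x, x ∉ Set.Icc (-(r - a)) (r - a) → f x = 0 := by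
    intro x hx
    simp only [Set.mem_Icc, not_and_or, not_le] at hx
    have habs : r - a < |x| := by
      rcases hx with h | h
      · calc r - a < -x := by linarith
          _ ≤ |x| := neg_le_abs x
      · exact h.trans_le (le_abs_self x)
    have : r ^ 2 - (|x| + a) ^ 2 ≤ 0 := by nlinarith [abs_nonneg x]
    simp only [hfdef, Real.sqrt_eq_zero_of_nonpos this, mul_zero]
  have hcs : HasCompactSupport f := HasCompactSupport.intro isCompact_Icc hsupp
  have hint : Integrable f := hcontf.integrable_of_hasCompactSupport hcs
  rw [← MeasureTheory.ofReal_integral_eq_lintegral_ofReal hint (ae_of_all _ hnn)]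
  congr 1
  have hca : 0 ≤ r - a := by linarith
  have h5 : ∫ x, f x = ∫ x in (-(r - a))..(r - a), f x := by
    rw [← setIntegral_eq_integral_of_forall_compl_eq_zero hsupp,
      intervalIntegral.integral_of_le (by linarith), ← MeasureTheory.integral_Icc_eq_integral_Ioc]
  have hint1 : IntervalIntegrable f volume (-(r - a)) 0 := hcontf.intervalIntegrable _ _
  have hint2 : IntervalIntegrable f volume 0 (r - a) := hcontf.intervalIntegrable _ _
  have heven : ∫ x in (-(r - a))..(0 : ℝ), f x = ∫ x in (0 : ℝ)..(r - a), f x := by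
    have hneg := intervalIntegral.integral_comp_neg (a := (0 : ℝ)) (b := r - a) (f := f)
    simp only [neg_zero] at hneg
    rw [← hneg]
    apply intervalIntegral.integral_congr
    intro x _
    simp only [hfdef, abs_neg]
  have h6 : ∫ x in (-(r - a))..(r - a), f x = 2 * ∫ x in (0 : ℝ)..(r - a), f x := by
    rw [← intervalIntegral.integral_add_adjacent_intervals hint1 hint2, heven]
    ring
  have h7 : ∫ x in (0 : ℝ)..(r - a), f x
      = ∫ x in (0 : ℝ)..(r - a), 2 * Real.sqrt (r ^ 2 - (x + a) ^ 2) := by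
    apply intervalIntegral.integral_congr
    intro x hx
    rw [Set.uIcc_of_le (by linarith)] at hx
    simp only [hfdef, abs_of_nonneg hx.1]
  have h8 : ∫ x in (0 : ℝ)..(r - a), 2 * Real.sqrt (r ^ 2 - (x + a) ^ 2)
      = 2 * ∫ u in a..r, Real.sqrt (r ^ 2 - u ^ 2) := by
    rw [intervalIntegral.integral_const_mul]
    congr 1
    have := intervalIntegral.integral_comp_add_right (a := (0 : ℝ)) (b := r - a)
      (f := fun u => Real.sqrt (r ^ 2 - u ^ 2)) a
    rw [this]
    norm_num
  rw [h5, h6, h7, h8, key_integral r a ha har, Real.arccos_eq_pi_div_two_sub_arcsin]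
  ring

theorem area_intersection_two_equal_disks (r d : ℝ) (hr : 0 < r) (hd0 : 0 ≤ d)
    (hd : d < 2 * r) (c₁ c₂ : EuclideanSpace ℝ (Fin 2)) (hdist : dist c₁ c₂ = d) :
    volume (Metric.closedBall c₁ r ∩ Metric.closedBall c₂ r) =
      ENNReal.ofReal (r ^ 2 * (2 * arccos (d / (2 * r)) - Real.sin (2 * arccos (d / (2 * r))))) := by
  set a : ℝ := d / 2 with ha_def
  have ha0 : 0 ≤ a := by positivity
  have har : a < r := by rw [ha_def]; linarith
  set e : EuclideanSpace ℝ (Fin 2) := EuclideanSpace.single (0 : Fin 2) (1 : ℝ) with he_def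
  have hnorm : ‖c₂ - c₁‖ = ‖d • e‖ := by
    rw [norm_smul, he_def, EuclideanSpace.norm_single, norm_one, Real.norm_eq_abs,
      abs_of_nonneg hd0, mul_one, ← dist_eq_norm, dist_comm, hdist]
  set f := Submodule.reflection (ℝ ∙ ((c₂ - c₁) - d • e))ᗮ with hf_def
  have hf : f (c₂ - c₁) = d • e := Submodule.reflection_sub hnorm
  set T : Set (ℝ × ℝ) :=
    {p : ℝ × ℝ | (p.1 + a) ^ 2 + p.2 ^ 2 ≤ r ^ 2 ∧ (p.1 - a) ^ 2 + p.2 ^ 2 ≤ r ^ 2} with hTdef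
  have hT : MeasurableSet T := by
    have : T = {p : ℝ × ℝ | (p.1 + a) ^ 2 + p.2 ^ 2 ≤ r ^ 2} ∩
        {p : ℝ × ℝ | (p.1 - a) ^ 2 + p.2 ^ 2 ≤ r ^ 2} := rfl
    rw [this]
    exact (measurableSet_le (by fun_prop) measurable_const).inter
      (measurableSet_le (by fun_prop) measurable_const)
  set Φ : EuclideanSpace ℝ (Fin 2) → ℝ × ℝ := fun x =>
    (MeasurableEquiv.finTwoArrow ((MeasurableEquiv.toLp 2 (Fin 2 → ℝ)).symm (f (x + (-c₁)))))
      + (-a, 0) with hΦ_def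
  have hΦ : MeasurePreserving Φ volume volume := by
    have hcomp : Φ = (fun p : ℝ × ℝ => p + (-a, 0)) ∘ (⇑(MeasurableEquiv.finTwoArrow)) ∘
        (⇑(MeasurableEquiv.toLp 2 (Fin 2 → ℝ)).symm) ∘ ⇑f ∘
        (fun x : EuclideanSpace ℝ (Fin 2) => x + (-c₁)) := rfl
    rw [hcomp]
    exact (measurePreserving_add_right volume ((-a, 0) : ℝ × ℝ)).comp
      ((volume_preserving_finTwoArrow ℝ).comp
        ((EuclideanSpace.volume_preserving_symm_measurableEquiv_toLp (Fin 2)).comp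
          (f.measurePreserving.comp (measurePreserving_add_right volume (-c₁)))))
  have hnorm_iff : ∀ z : EuclideanSpace ℝ (Fin 2),
      (‖z‖ ≤ r ↔ (z 0) ^ 2 + (z 1) ^ 2 ≤ r ^ 2) := by
    intro z
    rw [EuclideanSpace.norm_eq, Fin.sum_univ_two, Real.norm_eq_abs, Real.norm_eq_abs,
      sq_abs, sq_abs]
    constructor
    · intro h
      have h2 : (0:ℝ) ≤ z 0 ^ 2 + z 1 ^ 2 := by positivity
      nlinarith [Real.sq_sqrt h2, Real.sqrt_nonneg (z 0 ^ 2 + z 1 ^ 2)]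
    · intro h
      calc Real.sqrt (z 0 ^ 2 + z 1 ^ 2) ≤ Real.sqrt (r ^ 2) := Real.sqrt_le_sqrt h
        _ = r := Real.sqrt_sq hr.le
  have hpre : Metric.closedBall c₁ r ∩ Metric.closedBall c₂ r = Φ ⁻¹' T := by
    ext x
    simp only [Set.mem_inter_iff, Metric.mem_closedBall, dist_eq_norm, Set.mem_preimage,
      hΦ_def, hTdef, Set.mem_setOf_eq]
    have hy1 : x - c₁ = x + (-c₁) := by abel
    set y : EuclideanSpace ℝ (Fin 2) := f (x + (-c₁)) with hy_def
    have hb1 : ‖x - c₁‖ ≤ r ↔ (y 0) ^ 2 + (y 1) ^ 2 ≤ r ^ 2 := by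
      rw [← hnorm_iff, hy_def, f.norm_map, hy1]
    have hxc2 : f (x - c₂) = y - d • e := by
      have : x - c₂ = (x + (-c₁)) - (c₂ - c₁) := by abel
      rw [this, map_sub, hf, hy_def]
    have hb2 : ‖x - c₂‖ ≤ r ↔ (y 0 - d) ^ 2 + (y 1) ^ 2 ≤ r ^ 2 := by
      have h0 : (y - d • e) 0 = y 0 - d := by
        simp [he_def, PiLp.sub_apply, PiLp.smul_apply, EuclideanSpace.single_apply]
      have h1 : (y - d • e) 1 = y 1 := by
        simp [he_def, PiLp.sub_apply, PiLp.smul_apply, EuclideanSpace.single_apply]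
      rw [← f.norm_map (x - c₂), hxc2, hnorm_iff, h0, h1]
    have hΦx1 : ((MeasurableEquiv.finTwoArrow
        ((MeasurableEquiv.toLp 2 (Fin 2 → ℝ)).symm y)) + ((-a : ℝ), (0:ℝ))).1 = y 0 - a := by
      simp [MeasurableEquiv.finTwoArrow, MeasurableEquiv.toLp_symm_apply]
      ring
    have hΦx2 : ((MeasurableEquiv.finTwoArrow
        ((MeasurableEquiv.toLp 2 (Fin 2 → ℝ)).symm y)) + ((-a : ℝ), (0:ℝ))).2 = y 1 := by
      simp [MeasurableEquiv.finTwoArrow, MeasurableEquiv.toLp_symm_apply]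
    rw [hb1, hb2, hΦx1, hΦx2]
    constructor
    · rintro ⟨h1, h2⟩
      constructor
      · have : y 0 - a + a = y 0 := by ring
        rw [this]; exact h1
      · have : y 0 - a - a = y 0 - d := by rw [ha_def]; ring
        rw [this]; exact h2
    · rintro ⟨h1, h2⟩
      constructor
      · have : y 0 - a + a = y 0 := by ring
        rw [this] at h1; exact h1
      · have : y 0 - a - a = y 0 - d := by rw [ha_def]; ring
        rw [this] at h2; exact h2
  rw [hpre, hΦ.measure_preimage hT.nullMeasurableSet, hTdef, lens_area r a ha0 har]
  congr 1
  have htd : d / (2 * r) = a / r := by rw [ha_def]; ring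
  have ht0 : 0 ≤ a / r := by positivity
  have ht1 : a / r ≤ 1 := by rw [div_le_one hr]; linarith
  rw [htd, Real.sin_two_mul, Real.sin_arccos, Real.cos_arccos (by linarith) ht1]
  have hsq : Real.sqrt (1 - (a / r) ^ 2) = Real.sqrt (r ^ 2 - a ^ 2) / r := by
    have h9 : 1 - (a / r) ^ 2 = (r ^ 2 - a ^ 2) / r ^ 2 := by field_simp
    rw [h9, Real.sqrt_div (by nlinarith) , Real.sqrt_sq hr.le]
  rw [hsq]
  field_simp
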